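/- Let E be a CPTP projection on the d×d complex matrices (CPTP and E∘E = E) admitting a positive-definite fixed density matrix ρ (E(ρ) = ρ, ρ positive definite of trace 1). Then E is self-adjoint with respect to the ρ^{−1}-weighted inner products: for all d×d matrices X and Y, Tr(E(X) ρ^{−1} Y) = Tr(X ρ^{−1} E(Y)) and Tr(E(X) ρ^{−1/2} Y ρ^{−1/2}) = Tr(X ρ^{−1/2} E(Y) ρ^{−1/2}). Consequently E is the orthogonal projection onto fix(E) with respect to each of these inner products. -/

import Mathlib

open Matrix
open scoped ComplexOrder

/-- A map on `d × d` complex matrices is CPTP if it admits a Kraus (operator-sum)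
representation `E(X) = ∑ k, M k * X * (M k)ᴴ` with `∑ k, (M k)ᴴ * M k = 1`. -/
def IsCPTP {d : ℕ} (E : Matrix (Fin d) (Fin d) ℂ → Matrix (Fin d) (Fin d) ℂ) : Prop :=
  ∃ (m : ℕ) (M : Fin m → Matrix (Fin d) (Fin d) ℂ),
    (∀ X, E X = ∑ k, M k * X * (M k)ᴴ) ∧ (∑ k, (M k)ᴴ * M k = 1)

/-- The old Mathlib `Matrix.PosSemidef.sqrt` (removed since), with its old definition. -/
noncomputable def posSemidefSqrtOld {d : ℕ} {A : Matrix (Fin d) (Fin d) ℂ} (hA : A.PosSemidef) :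
    Matrix (Fin d) (Fin d) ℂ :=
  (hA.1.eigenvectorUnitary : Matrix (Fin d) (Fin d) ℂ) *
    diagonal (fun i => ((Real.sqrt (hA.1.eigenvalues i) : ℝ) : ℂ)) *
    (star hA.1.eigenvectorUnitary : Matrix (Fin d) (Fin d) ℂ)
lemma posSemidefSqrtOld_posSemidef {d : ℕ} {A : Matrix (Fin d) (Fin d) ℂ} (hA : A.PosSemidef) :
    (posSemidefSqrtOld hA).PosSemidef := by
  unfold posSemidefSqrtOld
  rw [← conjTranspose_conjTranspose (star (hA.1.eigenvectorUnitary : Matrix (Fin d) (Fin d) ℂ)),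
    star_eq_conjTranspose, conjTranspose_conjTranspose]
  apply PosSemidef.mul_mul_conjTranspose_same
  apply PosSemidef.diagonal
  intro i
  simp only [Pi.zero_apply]
  exact_mod_cast Real.sqrt_nonneg _
lemma spectralOld {d : ℕ} {A : Matrix (Fin d) (Fin d) ℂ} (hA : A.IsHermitian) :
    A = (hA.eigenvectorUnitary : Matrix (Fin d) (Fin d) ℂ) *
      diagonal (RCLike.ofReal ∘ hA.eigenvalues) *
      (star hA.eigenvectorUnitary : Matrix (Fin d) (Fin d) ℂ) := by
  have h := hA.spectral_theorem
  rwa [Unitary.conjStarAlgAut_apply] at h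
lemma posSemidefSqrtOld_mul_self {d : ℕ} {A : Matrix (Fin d) (Fin d) ℂ} (hA : A.PosSemidef) :
    posSemidefSqrtOld hA * posSemidefSqrtOld hA = A := by
  unfold posSemidefSqrtOld
  have hU2 : (star hA.1.eigenvectorUnitary : Matrix (Fin d) (Fin d) ℂ) *
      (hA.1.eigenvectorUnitary : Matrix (Fin d) (Fin d) ℂ) = 1 :=
    mem_unitaryGroup_iff'.mp hA.1.eigenvectorUnitary.2
  conv_rhs => rw [spectralOld hA.1]
  simp only [mul_assoc]
  rw [← mul_assoc (star _ : Matrix (Fin d) (Fin d) ℂ) _ (diagonal _ * _), hU2, one_mul,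
    ← mul_assoc (diagonal _), diagonal_mul_diagonal]
  congr 3
  funext i
  simp only [Function.comp_apply]
  rw [← Complex.ofReal_mul, Real.mul_self_sqrt (hA.eigenvalues_nonneg i)]
  rfl

lemma traceCT {d : ℕ} (B : Matrix (Fin d) (Fin d) ℂ) :
    (Bᴴ * B).trace = ((∑ i, ∑ j, Complex.normSq (B j i) : ℝ) : ℂ) := by
  simp only [Matrix.trace, Matrix.diag, Matrix.mul_apply, Matrix.conjTranspose_apply]
  push_cast
  congr 1; ext i; congr 1; ext j
  rw [Complex.normSq_eq_conj_mul_self]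
  rfl

lemma eq_zero_of_traceCT {d : ℕ} (B : Matrix (Fin d) (Fin d) ℂ) (h : (Bᴴ * B).trace = 0) :
    B = 0 := by
  rw [traceCT] at h
  norm_cast at h
  have h2 := (Finset.sum_eq_zero_iff_of_nonneg (fun i _ => Finset.sum_nonneg
    (fun j _ => Complex.normSq_nonneg _))).mp h
  ext i j
  have h3 := (Finset.sum_eq_zero_iff_of_nonneg
    (fun j _ => Complex.normSq_nonneg _)).mp (h2 j (Finset.mem_univ _)) i (Finset.mem_univ _)
  simpa using Complex.normSq_eq_zero.mp h3

lemma sqrt_commute_aux {d : ℕ} {q Y : Matrix (Fin d) (Fin d) ℂ} (hq : q.PosSemidef)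
    (hqd : IsUnit q.det) (μ : ℝ) (hμ : 0 < μ)
    (h : (q * q) * Y = (μ : ℂ) • (Y * (q * q))) :
    q * Y = (Real.sqrt μ : ℂ) • (Y * q) := by
  have hs2 : ((Real.sqrt μ : ℂ)) * ((Real.sqrt μ : ℂ)) = (μ : ℂ) := by
    norm_cast; exact Real.mul_self_sqrt hμ.le
  set W : Matrix (Fin d) (Fin d) ℂ := q * Y - (Real.sqrt μ : ℂ) • (Y * q) with hW
  have h' : q * (q * Y) = ((Real.sqrt μ : ℂ) * (Real.sqrt μ : ℂ)) • (Y * (q * q)) := by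
    rw [← mul_assoc, h, hs2]
  have key : q * W = (-(Real.sqrt μ : ℂ)) • (W * q) := by
    simp only [hW, mul_sub, sub_mul, Matrix.mul_smul, Matrix.smul_mul, mul_assoc, h']
    module
  set r := posSemidefSqrtOld hq with hr
  have hrr : r * r = q := posSemidefSqrtOld_mul_self hq
  have hrH : rᴴ = r := (posSemidefSqrtOld_posSemidef hq).1
  have t1 : ((r * W)ᴴ * (r * W)).trace = (Wᴴ * (q * W)).trace := by
    rw [conjTranspose_mul, hrH, mul_assoc, ← mul_assoc r r W, hrr]
  have t2 : ((W * r)ᴴ * (W * r)).trace = (Wᴴ * (W * q)).trace := by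
    have lhs1 : ((W * r)ᴴ * (W * r)) = r * (Wᴴ * (W * r)) := by
      rw [conjTranspose_mul, hrH, mul_assoc]
    rw [lhs1, Matrix.trace_mul_comm]
    congr 1
    rw [mul_assoc, mul_assoc, hrr]
  have t3 : (Wᴴ * (q * W)).trace = (-(Real.sqrt μ : ℂ)) * (Wᴴ * (W * q)).trace := by
    rw [key, Matrix.mul_smul, Matrix.trace_smul, smul_eq_mul]
  have e1 : ((∑ i, ∑ j, Complex.normSq ((r * W) j i) : ℝ) : ℂ)
      = -(Real.sqrt μ : ℂ) * ((∑ i, ∑ j, Complex.normSq ((W * r) j i) : ℝ) : ℂ) := by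
    rw [← traceCT, ← traceCT, t1, t2, t3]
  have e3 : (∑ i, ∑ j, Complex.normSq ((r * W) j i) : ℝ)
      = -Real.sqrt μ * (∑ i, ∑ j, Complex.normSq ((W * r) j i) : ℝ) := by
    exact_mod_cast e1
  have hann : 0 ≤ (∑ i, ∑ j, Complex.normSq ((r * W) j i) : ℝ) :=
    Finset.sum_nonneg fun i _ => Finset.sum_nonneg (fun j _ => Complex.normSq_nonneg _)
  have hbnn : 0 ≤ (∑ i, ∑ j, Complex.normSq ((W * r) j i) : ℝ) :=
    Finset.sum_nonneg fun i _ => Finset.sum_nonneg (fun j _ => Complex.normSq_nonneg _)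
  have ha0 : (∑ i, ∑ j, Complex.normSq ((r * W) j i) : ℝ) = 0 := by
    have : 0 ≤ Real.sqrt μ * (∑ i, ∑ j, Complex.normSq ((W * r) j i) : ℝ) :=
      mul_nonneg (Real.sqrt_nonneg _) hbnn
    linarith
  have hrW : r * W = 0 := by
    apply eq_zero_of_traceCT
    rw [traceCT, ha0]; norm_num
  have hqW : q * W = 0 := by rw [← hrr, mul_assoc, hrW, mul_zero]
  have hW0 : W = 0 := by
    calc W = q⁻¹ * (q * W) := by rw [← mul_assoc, Matrix.nonsing_inv_mul q hqd, one_mul]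
    _ = 0 := by rw [hqW, mul_zero]
  exact sub_eq_zero.mp (hW.symm.trans hW0)

lemma rel_step {d : ℕ} {ρ Y : Matrix (Fin d) (Fin d) ℂ} (hρdet : IsUnit ρ.det) (c : ℂ)
    (h2 : c • Y = ρ * Y * ρ⁻¹) : ρ * Y = c • (Y * ρ) := by
  have h4 : (ρ * Y * ρ⁻¹) * ρ = ρ * Y := by
    rw [mul_assoc (ρ * Y), Matrix.nonsing_inv_mul ρ hρdet, mul_one]
  rw [← h4, ← h2, Matrix.smul_mul]

lemma conj_step {d : ℕ} {ρ q Y : Matrix (Fin d) (Fin d) ℂ}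
    (hq2 : q * q = ρ) (hqPSD : q.PosSemidef) (hqdet : IsUnit q.det)
    (li lj : ℝ) (hli : 0 < li) (hlj : 0 < lj)
    (hYrel : ρ * Y = ((li / lj : ℝ) : ℂ) • (Y * ρ)) :
    q * Y * q⁻¹ = (((Real.sqrt li : ℝ) : ℂ) * (((Real.sqrt lj : ℝ) : ℂ))⁻¹) • Y := by
  have hμpos : 0 < li / lj := div_pos hli hlj
  have hkey := sqrt_commute_aux hqPSD hqdet (li / lj) hμpos (by rw [hq2]; exact hYrel)
  have hsq : Real.sqrt (li / lj) = Real.sqrt li * (Real.sqrt lj)⁻¹ := by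
    rw [Real.sqrt_div hli.le, div_eq_mul_inv]
  rw [hkey, Matrix.smul_mul, mul_assoc, Matrix.mul_nonsing_inv q hqdet, mul_one]
  congr 1
  rw [hsq]
  push_cast
  ring

namespace CPTPaux

variable {d m : ℕ} (M : Fin m → Matrix (Fin d) (Fin d) ℂ)

/-- The channel defined by the Kraus operators `M`. -/
noncomputable def KE (X : Matrix (Fin d) (Fin d) ℂ) : Matrix (Fin d) (Fin d) ℂ :=
  ∑ k, M k * X * (M k)ᴴ

/-- The (Hilbert–Schmidt) adjoint channel. -/
noncomputable def KF (X : Matrix (Fin d) (Fin d) ℂ) : Matrix (Fin d) (Fin d) ℂ :=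
  ∑ k, (M k)ᴴ * X * M k

lemma KE_add (X Y) : KE M (X + Y) = KE M X + KE M Y := by
  simp [KE, mul_add, add_mul, Finset.sum_add_distrib]

lemma KE_smul (c : ℂ) (X) : KE M (c • X) = c • KE M X := by
  simp [KE, Matrix.mul_smul, Matrix.smul_mul, Finset.smul_sum]

lemma KE_sum {n : Type*} (s : Finset n) (f : n → Matrix (Fin d) (Fin d) ℂ) :
    KE M (∑ i ∈ s, f i) = ∑ i ∈ s, KE M (f i) := by
  simp only [KE, Finset.mul_sum, Finset.sum_mul]
  rw [Finset.sum_comm]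

lemma KF_sub (X Y) : KF M (X - Y) = KF M X - KF M Y := by
  simp [KF, mul_sub, sub_mul, Finset.sum_sub_distrib]

lemma KF_conjTranspose (X) : (KF M X)ᴴ = KF M (Xᴴ) := by
  simp [KF, conjTranspose_sum, conjTranspose_mul, mul_assoc]

lemma adjKraus (X Y) : (KE M X * Y).trace = (X * KF M Y).trace := by
  simp only [KE, KF, Finset.sum_mul, Finset.mul_sum, Matrix.trace_sum]
  apply Finset.sum_congr rfl
  intro k _
  simp only [mul_assoc]
  rw [Matrix.trace_mul_comm, mul_assoc, mul_assoc]

lemma ndg {A : Matrix (Fin d) (Fin d) ℂ} (h : ∀ V, (A * V).trace = 0) : A = 0 := by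
  have h2 := eq_zero_of_traceCT (Aᴴ) (by rw [conjTranspose_conjTranspose]; exact h Aᴴ)
  calc A = Aᴴᴴ := (conjTranspose_conjTranspose A).symm
  _ = 0 := by rw [h2, conjTranspose_zero]

variable (hunit : ∑ k, (M k)ᴴ * M k = 1) (hproj : ∀ X, KE M (KE M X) = KE M X)
variable {ρ : Matrix (Fin d) (Fin d) ℂ} (hρ : ρ.PosDef) (hfix : KE M ρ = ρ)

include hproj in
lemma KF_idem (Z) : KF M (KF M Z) = KF M Z := by
  have h : ∀ V, ((KF M (KF M Z) - KF M Z) * V).trace = 0 := by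
    intro V
    have c1 : (KF M (KF M Z) * V).trace = (KF M Z * V).trace := by
      calc (KF M (KF M Z) * V).trace = (V * KF M (KF M Z)).trace := Matrix.trace_mul_comm _ _
      _ = (KE M V * KF M Z).trace := (adjKraus M V (KF M Z)).symm
      _ = (KE M (KE M V) * Z).trace := by
          rw [hproj V, ← adjKraus M (KE M V) Z, hproj V]
      _ = (KE M V * Z).trace := by rw [hproj V]
      _ = (V * KF M Z).trace := adjKraus M V Z
      _ = (KF M Z * V).trace := Matrix.trace_mul_comm _ _
    rw [Matrix.sub_mul, Matrix.trace_sub, c1, sub_self]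
  exact sub_eq_zero.mp (ndg h)

include hunit hproj hρ hfix in
lemma fix_comm (Z : Matrix (Fin d) (Fin d) ℂ) (k : Fin m) :
    M k * KF M Z = KF M Z * M k := by
  set A := KF M Z with hA
  have hAfix : KF M A = A := KF_idem M hproj Z
  have hAH : KF M Aᴴ = Aᴴ := by
    rw [hA, KF_conjTranspose]
    exact KF_idem M hproj Zᴴ
  have expand : ∀ k : Fin m, (M k * A - A * M k)ᴴ * (M k * A - A * M k)
      = (Aᴴ * ((M k)ᴴ * M k) * A - Aᴴ * ((M k)ᴴ * A * M k))
        - (((M k)ᴴ * Aᴴ * M k) * A - (M k)ᴴ * (Aᴴ * A) * M k) := by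
    intro k
    simp only [conjTranspose_sub, conjTranspose_mul, sub_mul, mul_sub, mul_assoc]
    abel
  have s1 : ∑ k : Fin m, Aᴴ * ((M k)ᴴ * M k) * A = Aᴴ * A := by
    have : ∑ k : Fin m, Aᴴ * ((M k)ᴴ * M k) * A = Aᴴ * (∑ k : Fin m, (M k)ᴴ * M k) * A := by
      rw [Finset.mul_sum, Finset.sum_mul]
    rw [this, hunit, mul_one]
  have s2 : ∑ k : Fin m, Aᴴ * ((M k)ᴴ * A * M k) = Aᴴ * A := by
    rw [← Finset.mul_sum]
    have : ∑ k : Fin m, (M k)ᴴ * A * M k = KF M A := rfl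
    rw [this, hAfix]
  have s3 : ∑ k : Fin m, ((M k)ᴴ * Aᴴ * M k) * A = Aᴴ * A := by
    rw [← Finset.sum_mul]
    have : ∑ k : Fin m, (M k)ᴴ * Aᴴ * M k = KF M Aᴴ := rfl
    rw [this, hAH]
  have s4 : ∑ k : Fin m, (M k)ᴴ * (Aᴴ * A) * M k = KF M (Aᴴ * A) := rfl
  have sumid : ∑ k : Fin m, (M k * A - A * M k)ᴴ * (M k * A - A * M k)
      = KF M (Aᴴ * A) - Aᴴ * A := by
    rw [Finset.sum_congr rfl (fun k _ => expand k)]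
    rw [Finset.sum_sub_distrib, Finset.sum_sub_distrib, Finset.sum_sub_distrib, s1, s2, s3, s4]
    abel
  have tr1 : (ρ * (KF M (Aᴴ * A) - Aᴴ * A)).trace = 0 := by
    rw [mul_sub, Matrix.trace_sub]
    have h1 := adjKraus M ρ (Aᴴ * A)
    rw [hfix] at h1
    rw [← h1, sub_self]
  have tr2 : ∑ k : Fin m,
      (ρ * ((M k * A - A * M k)ᴴ * (M k * A - A * M k))).trace = 0 := by
    rw [← Matrix.trace_sum, ← Finset.mul_sum, sumid, tr1]
  set q := posSemidefSqrtOld hρ.posSemidef with hq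
  have hq2 : q * q = ρ := posSemidefSqrtOld_mul_self hρ.posSemidef
  have hqH : qᴴ = q := (posSemidefSqrtOld_posSemidef hρ.posSemidef).1
  have hρdet : ρ.det ≠ 0 := (hρ.det_pos).ne'
  have hqdet : IsUnit q.det := by
    apply isUnit_iff_ne_zero.mpr
    intro h0
    apply hρdet
    rw [← hq2, det_mul, h0, mul_zero]
  have per : ∀ C : Matrix (Fin d) (Fin d) ℂ,
      (ρ * (Cᴴ * C)).trace = ((C * q)ᴴ * (C * q)).trace := by
    intro C
    rw [conjTranspose_mul, hqH, ← hq2, mul_assoc, Matrix.trace_mul_comm]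
    simp only [mul_assoc]
  have tr3 : ∑ k : Fin m, (∑ i, ∑ j,
      Complex.normSq (((M k * A - A * M k) * q) j i) : ℝ) = 0 := by
    have := tr2
    rw [Finset.sum_congr rfl (fun k _ => (per _).trans (traceCT _))] at this
    exact_mod_cast this
  have each : ∀ k : Fin m, (M k * A - A * M k) * q = 0 := by
    intro k
    have h4 := (Finset.sum_eq_zero_iff_of_nonneg (fun k _ => Finset.sum_nonneg
      (fun i _ => Finset.sum_nonneg (fun j _ => Complex.normSq_nonneg _)))).mp tr3
      k (Finset.mem_univ _)
    apply eq_zero_of_traceCT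
    rw [traceCT, h4]
    norm_num
  have hC : M k * A - A * M k = 0 := by
    have h5 : (M k * A - A * M k) * (q * q⁻¹) = M k * A - A * M k := by
      rw [Matrix.mul_nonsing_inv q hqdet, mul_one]
    rw [← h5, ← mul_assoc, each k, Matrix.zero_mul]
  exact sub_eq_zero.mp hC

include hunit hproj hρ hfix in
lemma fix_commH (Z : Matrix (Fin d) (Fin d) ℂ) (k : Fin m) :
    (M k)ᴴ * KF M Z = KF M Z * (M k)ᴴ := by
  have h1 := congrArg conjTranspose (fix_comm M hunit hproj hρ hfix Zᴴ k)
  simp only [conjTranspose_mul, KF_conjTranspose, conjTranspose_conjTranspose] at h1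
  exact h1.symm

include hunit hproj hρ hfix in
lemma fixL (Z : Matrix (Fin d) (Fin d) ℂ) : KE M (ρ * KF M Z) = ρ * KF M Z := by
  have step : ∀ k : Fin m, M k * (ρ * KF M Z) * (M k)ᴴ = (M k * ρ * (M k)ᴴ) * KF M Z := by
    intro k
    simp only [mul_assoc]
    rw [fix_commH M hunit hproj hρ hfix Z k]
  calc KE M (ρ * KF M Z) = ∑ k, (M k * ρ * (M k)ᴴ) * KF M Z := by
        rw [KE, Finset.sum_congr rfl (fun k _ => step k)]
  _ = (∑ k, M k * ρ * (M k)ᴴ) * KF M Z := by rw [Finset.sum_mul]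
  _ = ρ * KF M Z := by rw [show (∑ k, M k * ρ * (M k)ᴴ) = KE M ρ from rfl, hfix]

include hunit hproj hρ hfix in
lemma fixR (Z : Matrix (Fin d) (Fin d) ℂ) : KE M (KF M Z * ρ) = KF M Z * ρ := by
  have step : ∀ k : Fin m, M k * (KF M Z * ρ) * (M k)ᴴ = KF M Z * (M k * ρ * (M k)ᴴ) := by
    intro k
    rw [← mul_assoc, ← mul_assoc, fix_comm M hunit hproj hρ hfix Z k]
    simp only [mul_assoc]
  calc KE M (KF M Z * ρ) = ∑ k, KF M Z * (M k * ρ * (M k)ᴴ) := by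
        rw [KE, Finset.sum_congr rfl (fun k _ => step k)]
  _ = KF M Z * (∑ k, M k * ρ * (M k)ᴴ) := by rw [Finset.mul_sum]
  _ = KF M Z * ρ := by rw [show (∑ k, M k * ρ * (M k)ᴴ) = KE M ρ from rfl, hfix]

include hunit hproj hρ hfix in
lemma keyL (Z : Matrix (Fin d) (Fin d) ℂ) : KE M (ρ * Z) = ρ * KF M Z := by
  have e2 : KE M (ρ * (Z - KF M Z)) = 0 := by
    apply ndg (A := KE M (ρ * (Z - KF M Z)))
    intro V
    rw [adjKraus M (ρ * (Z - KF M Z)) V]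
    calc (ρ * (Z - KF M Z) * KF M V).trace
        = (KF M V * ρ * (Z - KF M Z)).trace := Matrix.trace_mul_cycle ρ (Z - KF M Z) (KF M V)
    _ = (KE M (KF M V * ρ) * (Z - KF M Z)).trace := by
          rw [fixR M hunit hproj hρ hfix V]
    _ = (KF M V * ρ * KF M (Z - KF M Z)).trace := adjKraus M _ _
    _ = 0 := by
          rw [KF_sub M Z (KF M Z), KF_idem M hproj Z, sub_self, mul_zero, Matrix.trace_zero]
  have split : ρ * Z = ρ * KF M Z + ρ * (Z - KF M Z) := by
    rw [mul_sub]; abel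
  rw [split, KE_add M, e2, add_zero, fixL M hunit hproj hρ hfix Z]

include hunit hproj hρ hfix in
lemma keyR (Z : Matrix (Fin d) (Fin d) ℂ) : KE M (Z * ρ) = KF M Z * ρ := by
  have e2 : KE M ((Z - KF M Z) * ρ) = 0 := by
    apply ndg (A := KE M ((Z - KF M Z) * ρ))
    intro V
    rw [adjKraus M ((Z - KF M Z) * ρ) V]
    calc ((Z - KF M Z) * ρ * KF M V).trace
        = (ρ * KF M V * (Z - KF M Z)).trace := by
          rw [Matrix.trace_mul_cycle, Matrix.trace_mul_cycle]
    _ = (KE M (ρ * KF M V) * (Z - KF M Z)).trace := by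
          rw [fixL M hunit hproj hρ hfix V]
    _ = (ρ * KF M V * KF M (Z - KF M Z)).trace := adjKraus M _ _
    _ = 0 := by
          rw [KF_sub M Z (KF M Z), KF_idem M hproj Z, sub_self, mul_zero, Matrix.trace_zero]
  have split : Z * ρ = KF M Z * ρ + (Z - KF M Z) * ρ := by
    rw [sub_mul]; abel
  rw [split, KE_add M, e2, add_zero, fixR M hunit hproj hρ hfix Z]

include hunit hproj hρ hfix in
lemma invL (Y : Matrix (Fin d) (Fin d) ℂ) : KF M (ρ⁻¹ * Y) = ρ⁻¹ * KE M Y := by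
  have hρdet : IsUnit ρ.det := isUnit_iff_ne_zero.mpr (hρ.det_pos).ne'
  have h1 := keyL M hunit hproj hρ hfix (ρ⁻¹ * Y)
  rw [← mul_assoc, Matrix.mul_nonsing_inv ρ hρdet, one_mul] at h1
  rw [h1, ← mul_assoc, Matrix.nonsing_inv_mul ρ hρdet, one_mul]

include hunit hproj hρ hfix in
lemma invR (X : Matrix (Fin d) (Fin d) ℂ) : KF M (X * ρ⁻¹) = KE M X * ρ⁻¹ := by
  have hρdet : IsUnit ρ.det := isUnit_iff_ne_zero.mpr (hρ.det_pos).ne'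
  have h1 := keyR M hunit hproj hρ hfix (X * ρ⁻¹)
  rw [mul_assoc, Matrix.nonsing_inv_mul ρ hρdet, mul_one] at h1
  rw [h1, mul_assoc, Matrix.mul_nonsing_inv ρ hρdet, mul_one]

include hunit hproj hρ hfix in
lemma deltaComm (X : Matrix (Fin d) (Fin d) ℂ) :
    KE M (ρ * X * ρ⁻¹) = ρ * KE M X * ρ⁻¹ := by
  rw [mul_assoc, keyL M hunit hproj hρ hfix (X * ρ⁻¹), invR M hunit hproj hρ hfix X,
    ← mul_assoc]

include hunit hproj hfix in
lemma sqrtConj (X : Matrix (Fin d) (Fin d) ℂ) :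
    KE M (posSemidefSqrtOld hρ.posSemidef * X * (posSemidefSqrtOld hρ.posSemidef)⁻¹)
      = posSemidefSqrtOld hρ.posSemidef * KE M X * (posSemidefSqrtOld hρ.posSemidef)⁻¹ := by
  set q := posSemidefSqrtOld hρ.posSemidef with hqdef
  have hq2 : q * q = ρ := posSemidefSqrtOld_mul_self hρ.posSemidef
  have hqPSD : q.PosSemidef := posSemidefSqrtOld_posSemidef hρ.posSemidef
  have hρdet : IsUnit ρ.det := (hρ.det_pos).ne'.isUnit
  have hqdet : IsUnit q.det := by
    apply isUnit_iff_ne_zero.mpr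
    intro h0
    apply (hρ.det_pos).ne'
    rw [← hq2, det_mul, h0, mul_zero]
  set hH := hρ.posSemidef.1 with hHdef
  set U : Matrix (Fin d) (Fin d) ℂ := (hH.eigenvectorUnitary : Matrix (Fin d) (Fin d) ℂ)
    with hUdef
  set lam := hH.eigenvalues with hlamdef
  have hU1 : U * star U = 1 := mem_unitaryGroup_iff.mp hH.eigenvectorUnitary.2
  have hU2 : star U * U = 1 := mem_unitaryGroup_iff'.mp hH.eigenvectorUnitary.2
  have hspecρ : ρ = U * diagonal (RCLike.ofReal ∘ lam) * star U := hH.spectral_theorem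
  have hspecq : q = U * diagonal (RCLike.ofReal ∘ Real.sqrt ∘ lam) * star U := rfl
  have lampos : ∀ i, 0 < lam i := fun i => hρ.eigenvalues_pos i
  set P : Fin d → Matrix (Fin d) (Fin d) ℂ :=
    fun i => U * diagonal (fun j => if j = i then (1 : ℂ) else 0) * star U with hPdef
  have hdsum : ∑ i, diagonal (fun j => if j = i then (1 : ℂ) else 0)
      = (1 : Matrix (Fin d) (Fin d) ℂ) := by
    ext a b
    simp only [Matrix.sum_apply, Matrix.diagonal_apply, Matrix.one_apply]
    by_cases hab : a = b
    · subst hab; simp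
    · simp [hab]
  have hPsum : ∑ i, P i = 1 := by
    simp only [hPdef]
    rw [← Finset.sum_mul, ← Finset.mul_sum, hdsum, mul_one, hU1]
  have dmulL : ∀ (f : Fin d → ℂ) (i : Fin d),
      diagonal f * diagonal (fun j => if j = i then (1 : ℂ) else 0)
        = f i • diagonal (fun j => if j = i then (1 : ℂ) else 0) := by
    intro f i
    rw [diagonal_mul_diagonal]
    ext a b
    simp only [Matrix.diagonal_apply, Matrix.smul_apply, smul_eq_mul, Pi.mul_apply]
    by_cases hab : a = b
    · subst hab
      by_cases hai : a = i <;> simp [hai]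
    · simp [hab]
  have dmulR : ∀ (f : Fin d → ℂ) (i : Fin d),
      diagonal (fun j => if j = i then (1 : ℂ) else 0) * diagonal f
        = f i • diagonal (fun j => if j = i then (1 : ℂ) else 0) := by
    intro f i
    rw [diagonal_mul_diagonal]
    ext a b
    simp only [Matrix.diagonal_apply, Matrix.smul_apply, smul_eq_mul, Pi.mul_apply]
    by_cases hab : a = b
    · subst hab
      by_cases hai : a = i <;> simp [hai]
    · simp [hab]
  have hPL : ∀ (f : Fin d → ℂ) (i : Fin d),
      (U * diagonal f * star U) * P i = f i • P i := by
    intro f i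
    simp only [hPdef]
    calc (U * diagonal f * star U) * (U * diagonal (fun j => if j = i then (1:ℂ) else 0) * star U)
        = U * diagonal f * (star U * U) * diagonal (fun j => if j = i then (1:ℂ) else 0)
          * star U := by simp only [mul_assoc]
    _ = U * (diagonal f * diagonal (fun j => if j = i then (1:ℂ) else 0)) * star U := by
          rw [hU2]; simp only [mul_one, mul_assoc]
    _ = f i • (U * diagonal (fun j => if j = i then (1:ℂ) else 0) * star U) := by
          rw [dmulL f i]
          simp only [Matrix.mul_smul, Matrix.smul_mul]
  have hPR : ∀ (f : Fin d → ℂ) (i : Fin d),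
      P i * (U * diagonal f * star U) = f i • P i := by
    intro f i
    simp only [hPdef]
    calc (U * diagonal (fun j => if j = i then (1:ℂ) else 0) * star U) * (U * diagonal f * star U)
        = U * diagonal (fun j => if j = i then (1:ℂ) else 0) * (star U * U) * diagonal f
          * star U := by simp only [mul_assoc]
    _ = U * (diagonal (fun j => if j = i then (1:ℂ) else 0) * diagonal f) * star U := by
          rw [hU2]; simp only [mul_one, mul_assoc]
    _ = f i • (U * diagonal (fun j => if j = i then (1:ℂ) else 0) * star U) := by
          rw [dmulR f i]
          simp only [Matrix.mul_smul, Matrix.smul_mul]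
  have hρP : ∀ i, ρ * P i = ((lam i : ℝ) : ℂ) • P i := by
    intro i; rw [hspecρ]; exact hPL _ i
  have hPρ : ∀ i, P i * ρ = ((lam i : ℝ) : ℂ) • P i := by
    intro i; rw [hspecρ]; exact hPR _ i
  have hqP : ∀ i, q * P i = ((Real.sqrt (lam i) : ℝ) : ℂ) • P i := by
    intro i; rw [hspecq]; exact hPL _ i
  have hPq : ∀ i, P i * q = ((Real.sqrt (lam i) : ℝ) : ℂ) • P i := by
    intro i; rw [hspecq]; exact hPR _ i
  have hPρinv : ∀ i, P i * ρ⁻¹ = (((lam i : ℝ) : ℂ))⁻¹ • P i := by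
    intro i
    have h1 : ((lam i : ℝ) : ℂ) • (P i * ρ⁻¹) = P i := by
      rw [← Matrix.smul_mul, ← hPρ, mul_assoc, Matrix.mul_nonsing_inv ρ hρdet, mul_one]
    have hne : ((lam i : ℝ) : ℂ) ≠ 0 := by
      simp only [ne_eq, Complex.ofReal_eq_zero]
      exact (lampos i).ne'
    calc P i * ρ⁻¹ = (((lam i : ℝ) : ℂ))⁻¹ • (((lam i : ℝ) : ℂ) • (P i * ρ⁻¹)) := by
          rw [smul_smul, inv_mul_cancel₀ hne, one_smul]
    _ = (((lam i : ℝ) : ℂ))⁻¹ • P i := by rw [h1]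
  have hPqinv : ∀ i, P i * q⁻¹ = (((Real.sqrt (lam i) : ℝ) : ℂ))⁻¹ • P i := by
    intro i
    have h1 : ((Real.sqrt (lam i) : ℝ) : ℂ) • (P i * q⁻¹) = P i := by
      rw [← Matrix.smul_mul, ← hPq, mul_assoc, Matrix.mul_nonsing_inv q hqdet, mul_one]
    have hne : ((Real.sqrt (lam i) : ℝ) : ℂ) ≠ 0 := by
      simp only [ne_eq, Complex.ofReal_eq_zero]
      exact (Real.sqrt_pos.mpr (lampos i)).ne'
    calc P i * q⁻¹ = (((Real.sqrt (lam i) : ℝ) : ℂ))⁻¹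
          • (((Real.sqrt (lam i) : ℝ) : ℂ) • (P i * q⁻¹)) := by
          rw [smul_smul, inv_mul_cancel₀ hne, one_smul]
    _ = (((Real.sqrt (lam i) : ℝ) : ℂ))⁻¹ • P i := by rw [h1]
  have decomp : ∀ W : Matrix (Fin d) (Fin d) ℂ, W = ∑ i, ∑ j, P i * W * P j := by
    intro W
    calc W = (∑ i, P i) * W * (∑ j, P j) := by rw [hPsum, one_mul, mul_one]
    _ = ∑ i, ∑ j, P i * W * P j := by
        rw [Finset.sum_mul, Finset.sum_mul]
        apply Finset.sum_congr rfl
        intro i _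
        rw [Finset.mul_sum]
  have percomp : ∀ (i j : Fin d) (W : Matrix (Fin d) (Fin d) ℂ),
      KE M (q * (P i * W * P j) * q⁻¹) = q * KE M (P i * W * P j) * q⁻¹ := by
    intro i j W
    have hin : ρ * (P i * W * P j) * ρ⁻¹
        = (((lam i / lam j : ℝ)) : ℂ) • (P i * W * P j) := by
      calc ρ * (P i * W * P j) * ρ⁻¹ = (ρ * P i) * W * (P j * ρ⁻¹) := by
            simp only [mul_assoc]
      _ = (((lam i : ℝ) : ℂ) • P i) * W * ((((lam j : ℝ) : ℂ))⁻¹ • P j) := by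
            rw [hρP i, hPρinv j]
      _ = (((lam i / lam j : ℝ)) : ℂ) • (P i * W * P j) := by
            simp only [Matrix.smul_mul, Matrix.mul_smul, smul_smul]
            push_cast
            rw [div_eq_mul_inv, mul_comm]
    have h2 := deltaComm M hunit hproj hρ hfix (P i * W * P j)
    rw [hin, KE_smul] at h2
    have hYrel := rel_step hρdet _ h2
    have hout := conj_step hq2 hqPSD hqdet (lam i) (lam j) (lampos i) (lampos j) hYrel
    have hcin : q * (P i * W * P j) * q⁻¹
        = (((Real.sqrt (lam i) : ℝ) : ℂ) * (((Real.sqrt (lam j) : ℝ) : ℂ))⁻¹)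
          • (P i * W * P j) := by
      calc q * (P i * W * P j) * q⁻¹ = (q * P i) * W * (P j * q⁻¹) := by
            simp only [mul_assoc]
      _ = _ := by
            rw [hqP i, hPqinv j]
            simp only [Matrix.smul_mul, Matrix.mul_smul, smul_smul]
            congr 1
            ring
    rw [hcin, KE_smul, hout]
  have expand1 : q * X * q⁻¹ = ∑ i, ∑ j, q * (P i * X * P j) * q⁻¹ := by
    conv_lhs => rw [decomp X]
    rw [Finset.mul_sum, Finset.sum_mul]
    exact Finset.sum_congr rfl fun i _ => by rw [Finset.mul_sum, Finset.sum_mul]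
  have hKEX : KE M X = ∑ i, ∑ j, KE M (P i * X * P j) := by
    conv_lhs => rw [decomp X]
    rw [KE_sum]
    exact Finset.sum_congr rfl fun i _ => KE_sum M _ _
  calc KE M (q * X * q⁻¹)
      = ∑ i, ∑ j, KE M (q * (P i * X * P j) * q⁻¹) := by
        rw [expand1, KE_sum]
        exact Finset.sum_congr rfl fun i _ => KE_sum M _ _
  _ = ∑ i, ∑ j, q * KE M (P i * X * P j) * q⁻¹ :=
        Finset.sum_congr rfl fun i _ => Finset.sum_congr rfl fun j _ => percomp i j X
  _ = q * (∑ i, ∑ j, KE M (P i * X * P j)) * q⁻¹ := by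
        rw [Finset.mul_sum, Finset.sum_mul]
        exact Finset.sum_congr rfl fun i _ => by rw [Finset.mul_sum, Finset.sum_mul]
  _ = q * KE M X * q⁻¹ := by rw [← hKEX]

end CPTPaux

/-- A CPTP projection `E` with a positive-definite fixed density matrix `ρ` is
self-adjoint with respect to the `ρ⁻¹`-weighted inner products
`⟨X,Y⟩ = Tr(X ρ⁻¹ Y)` and `⟨X,Y⟩ₛ = Tr(X ρ^{-1/2} Y ρ^{-1/2})`; consequently `E` is the
orthogonal projection onto `fix(E)` with respect to each of these inner products
(`X - E X` is orthogonal to every fixed point). -/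
theorem cptp_projection_selfadjoint_weighted {d : ℕ}
    (E : Matrix (Fin d) (Fin d) ℂ → Matrix (Fin d) (Fin d) ℂ)
    (hE : IsCPTP E) (hproj : ∀ X, E (E X) = E X)
    (ρ : Matrix (Fin d) (Fin d) ℂ) (hρ : ρ.PosDef) (hρtr : ρ.trace = 1)
    (hfix : E ρ = ρ) :
    (∀ X Y, (E X * ρ⁻¹ * Y).trace = (X * ρ⁻¹ * E Y).trace) ∧
    (∀ X Y, (E X * (posSemidefSqrtOld hρ.posSemidef)⁻¹ * Y * (posSemidefSqrtOld hρ.posSemidef)⁻¹).trace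
          = (X * (posSemidefSqrtOld hρ.posSemidef)⁻¹ * E Y * (posSemidefSqrtOld hρ.posSemidef)⁻¹).trace) ∧
    (∀ X Y, E Y = Y →
      ((X - E X) * ρ⁻¹ * Y).trace = 0 ∧
      ((X - E X) * (posSemidefSqrtOld hρ.posSemidef)⁻¹ * Y * (posSemidefSqrtOld hρ.posSemidef)⁻¹).trace = 0) := by
  obtain ⟨m, M, hE1, hunit⟩ := hE
  have hEeq : ∀ X, E X = CPTPaux.KE M X := hE1
  have hproj' : ∀ X, CPTPaux.KE M (CPTPaux.KE M X) = CPTPaux.KE M X := by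
    intro X
    simp only [← hEeq]
    exact hproj X
  have hfix' : CPTPaux.KE M ρ = ρ := by rw [← hEeq]; exact hfix
  set q := posSemidefSqrtOld hρ.posSemidef with hqdef
  have hq2 : q * q = ρ := posSemidefSqrtOld_mul_self hρ.posSemidef
  have hqdet : IsUnit q.det := by
    apply isUnit_iff_ne_zero.mpr
    intro h0
    apply (hρ.det_pos).ne'
    rw [← hq2, det_mul, h0, mul_zero]
  have hρinv : ρ⁻¹ = q⁻¹ * q⁻¹ := by rw [← hq2, Matrix.mul_inv_rev]
  -- first statement
  have main1 : ∀ X Y, (E X * ρ⁻¹ * Y).trace = (X * ρ⁻¹ * E Y).trace := by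
    intro X Y
    rw [hEeq X, hEeq Y, mul_assoc, CPTPaux.adjKraus M X (ρ⁻¹ * Y),
      CPTPaux.invL M hunit hproj' hρ hfix' Y, ← mul_assoc]
  -- second statement
  have hG2 : ∀ Y, CPTPaux.KF M (q⁻¹ * (Y * q⁻¹)) = q⁻¹ * (CPTPaux.KE M Y * q⁻¹) := by
    intro Y
    have idA : ρ⁻¹ * (q * (Y * q⁻¹)) = q⁻¹ * (Y * q⁻¹) := by
      rw [hρinv, mul_assoc, ← mul_assoc q⁻¹ q, Matrix.nonsing_inv_mul q hqdet, one_mul]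
    have idB : ρ⁻¹ * (q * (CPTPaux.KE M Y * q⁻¹)) = q⁻¹ * (CPTPaux.KE M Y * q⁻¹) := by
      rw [hρinv, mul_assoc, ← mul_assoc q⁻¹ q, Matrix.nonsing_inv_mul q hqdet, one_mul]
    calc CPTPaux.KF M (q⁻¹ * (Y * q⁻¹))
        = CPTPaux.KF M (ρ⁻¹ * (q * (Y * q⁻¹))) := by rw [idA]
    _ = ρ⁻¹ * CPTPaux.KE M (q * (Y * q⁻¹)) := CPTPaux.invL M hunit hproj' hρ hfix' _
    _ = ρ⁻¹ * CPTPaux.KE M (q * Y * q⁻¹) := by rw [mul_assoc]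
    _ = ρ⁻¹ * (q * CPTPaux.KE M Y * q⁻¹) := by
          rw [CPTPaux.sqrtConj M hunit hproj' hρ hfix' Y]
    _ = ρ⁻¹ * (q * (CPTPaux.KE M Y * q⁻¹)) := by rw [mul_assoc]
    _ = q⁻¹ * (CPTPaux.KE M Y * q⁻¹) := idB
  have main2 : ∀ X Y, (E X * q⁻¹ * Y * q⁻¹).trace = (X * q⁻¹ * E Y * q⁻¹).trace := by
    intro X Y
    rw [hEeq X, hEeq Y]
    calc (CPTPaux.KE M X * q⁻¹ * Y * q⁻¹).trace
        = (CPTPaux.KE M X * (q⁻¹ * (Y * q⁻¹))).trace := by simp only [mul_assoc]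
    _ = (X * CPTPaux.KF M (q⁻¹ * (Y * q⁻¹))).trace := CPTPaux.adjKraus M X _
    _ = (X * (q⁻¹ * (CPTPaux.KE M Y * q⁻¹))).trace := by rw [hG2 Y]
    _ = (X * q⁻¹ * CPTPaux.KE M Y * q⁻¹).trace := by simp only [mul_assoc]
  refine ⟨main1, main2, ?_⟩
  intro X Y hY
  constructor
  · rw [Matrix.sub_mul, Matrix.sub_mul, Matrix.trace_sub, main1 X Y, hY, sub_self]
  · rw [Matrix.sub_mul, Matrix.sub_mul, Matrix.sub_mul, Matrix.trace_sub, main2 X Y, hY,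
      sub_self]
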